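/- Let M and K be complex separable Hilbert spaces and let T = [[D, C], [C*, F]] : M ⊕ K → M ⊕ K (with D = D* ∈ B(M), F = F* ∈ B(K), C ∈ B(K, M)) be both selfadjoint and unitary. Then for every z ∈ Z := ℂ ∖ ((−∞,−1] ∪ [1,+∞)) the operators I − zF and I + zD are boundedly invertible, the transfer function satisfies D + zC(I − zF)⁻¹C* = (zI + D)(I + zD)⁻¹, and this function takes unitary values at every point ξ of the unit circle with ξ ≠ ±1. -/

import Mathlib

open Complex ContinuousLinearMap
open scoped InnerProductSpace

noncomputable section

variable {M K : Type*} [NormedAddCommGroup M] [InnerProductSpace ℂ M] [CompleteSpace M]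
  [TopologicalSpace.SeparableSpace M]
  [NormedAddCommGroup K] [InnerProductSpace ℂ K] [CompleteSpace K]
  [TopologicalSpace.SeparableSpace K]

/-- The domain `Z = ℂ ∖ ((−∞,−1] ∪ [1,+∞))`. -/
def Zdom : Set ℂ := {z : ℂ | z ∉ (fun x : ℝ => (x : ℂ)) '' (Set.Iic (-1) ∪ Set.Ici 1)}

/-- The `2×2` block operator `[[D, C], [B, F]]` on the Hilbert direct sum `M ⊕ K`. -/
def blockOp (D : M →L[ℂ] M) (C : K →L[ℂ] M) (B : M →L[ℂ] K) (F : K →L[ℂ] K) :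
    WithLp 2 (M × K) →L[ℂ] WithLp 2 (M × K) :=
  ((WithLp.prodContinuousLinearEquiv 2 ℂ M K).symm : (M × K) →L[ℂ] WithLp 2 (M × K)) ∘L
    ((D ∘L ContinuousLinearMap.fst ℂ M K + C ∘L ContinuousLinearMap.snd ℂ M K).prod
      (B ∘L ContinuousLinearMap.fst ℂ M K + F ∘L ContinuousLinearMap.snd ℂ M K)) ∘L
    ((WithLp.prodContinuousLinearEquiv 2 ℂ M K) : WithLp 2 (M × K) →L[ℂ] (M × K))

/-- A complex number equal to a real of absolute value at least one is not in `Zdom`. -/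
lemma aux_not_mem_Zdom {x : ℝ} (hx : 1 ≤ |x|) : ((x : ℂ)) ∉ Zdom := by
  intro h
  exact h ⟨x, by rcases le_abs'.mp hx with h' | h'
                 · exact Or.inl (Set.mem_Iic.mpr (by linarith))
                 · exact Or.inr (Set.mem_Ici.mpr h'), rfl⟩

/-- For a selfadjoint contraction `A` and `z ∈ Zdom`, `1 - z • A` is invertible. -/
lemma aux_isUnit {E : Type*} [NormedAddCommGroup E] [InnerProductSpace ℂ E] [CompleteSpace E]
    [Nontrivial E] (A : E →L[ℂ] E) (hA : IsSelfAdjoint A) (hn : ‖A‖ ≤ 1) {z : ℂ}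
    (hz : z ∈ Zdom) : IsUnit ((1 : E →L[ℂ] E) - z • A) := by
  rcases eq_or_ne z 0 with rfl | hz0
  · simpa using isUnit_one (M := E →L[ℂ] E)
  by_contra h
  have h1 : (1 : E →L[ℂ] E) - z • A = z • (z⁻¹ • (1 : E →L[ℂ] E) - A) := by
    rw [smul_sub, smul_smul, mul_inv_cancel₀ hz0, one_smul]
  have h2 : ¬ IsUnit (z⁻¹ • (1 : E →L[ℂ] E) - A) := by
    intro hu
    apply h
    rw [h1]
    exact (isUnit_smul_iff (Units.mk0 z hz0) (z⁻¹ • (1 : E →L[ℂ] E) - A)).mpr hu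
  have hspec : z⁻¹ ∈ spectrum ℂ A := by
    rw [spectrum.mem_iff, Algebra.algebraMap_eq_smul_one]
    exact h2
  have hre : z⁻¹ = ((z⁻¹.re : ℝ) : ℂ) := hA.mem_spectrum_eq_re hspec
  have hnorm : ‖z⁻¹‖ ≤ 1 := le_trans (spectrum.norm_le_norm_of_mem hspec) hn
  set t : ℝ := z⁻¹.re with ht
  have ht0 : t ≠ 0 := by
    intro h0
    rw [h0] at hre
    exact hz0 (by simpa [inv_eq_zero] using hre)
  have habs : |t| ≤ 1 := by
    have h3 : ‖((t : ℝ) : ℂ)‖ = |t| := Complex.norm_real t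
    rw [← hre] at h3
    linarith [h3 ▸ hnorm]
  have hzt : z = ((t⁻¹ : ℝ) : ℂ) := by
    have h4 : z = (z⁻¹)⁻¹ := (inv_inv z).symm
    rw [h4, hre]
    push_cast
    rfl
  have habsinv : 1 ≤ |t⁻¹| := by
    rw [abs_inv]
    rw [le_inv_comm₀ (by positivity) (abs_pos.mpr ht0)]
    simpa using habs
  exact aux_not_mem_Zdom habsinv (hzt ▸ hz)

set_option maxHeartbeats 1000000 in
/-- If the block operator `T = [[D, C], [C*, F]]` on `M ⊕ K` (with
`D = D*`, `F = F*`) is selfadjoint and unitary, then for every `z ∈ Z` the operators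
`I − zF` and `I + zD` are boundedly invertible, the transfer function satisfies
`D + zC(I − zF)⁻¹C* = (zI + D)(I + zD)⁻¹`, and it takes unitary values at every point `ξ`
of the unit circle with `ξ ≠ ±1`. -/
theorem conservative_selfadjoint_transfer (D : M →L[ℂ] M) (C : K →L[ℂ] M) (F : K →L[ℂ] K)
    (hD : IsSelfAdjoint D) (hF : IsSelfAdjoint F)
    (hTsa : IsSelfAdjoint (blockOp D C (adjoint C) F))
    (hTun : blockOp D C (adjoint C) F ∈
      unitary (WithLp 2 (M × K) →L[ℂ] WithLp 2 (M × K))) :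
    (∀ z ∈ Zdom,
      IsUnit ((1 : K →L[ℂ] K) - z • F) ∧ IsUnit ((1 : M →L[ℂ] M) + z • D) ∧
      D + z • (C ∘L Ring.inverse ((1 : K →L[ℂ] K) - z • F) ∘L adjoint C) =
        (z • (1 : M →L[ℂ] M) + D) * Ring.inverse ((1 : M →L[ℂ] M) + z • D)) ∧
    (∀ ξ : ℂ, ‖ξ‖ = 1 → ξ ≠ 1 → ξ ≠ -1 →
      D + ξ • (C ∘L Ring.inverse ((1 : K →L[ℂ] K) - ξ • F) ∘L adjoint C) ∈
        unitary (M →L[ℂ] M)) := by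
  -- T² = 1
  have hT2 : blockOp D C (adjoint C) F * blockOp D C (adjoint C) F = 1 := by
    have := (Unitary.mem_iff.mp hTun).1
    rwa [hTsa.star_eq] at this
  -- component equations
  have happM : ∀ m : M, D (D m) + C (adjoint C m) = m := by
    intro m
    have := congrFun (congrArg (fun (T : WithLp 2 (M × K) →L[ℂ] WithLp 2 (M × K)) =>
      (T : WithLp 2 (M × K) → WithLp 2 (M × K))) hT2)
      ((WithLp.equiv 2 (M × K)).symm (m, 0))
    have h1 := congrArg (fun p => (WithLp.equiv 2 (M × K) p).1) this
    simpa [blockOp, map_zero] using h1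
  have happK1 : ∀ k : K, D (C k) + C (F k) = 0 := by
    intro k
    have := congrFun (congrArg (fun (T : WithLp 2 (M × K) →L[ℂ] WithLp 2 (M × K)) =>
      (T : WithLp 2 (M × K) → WithLp 2 (M × K))) hT2)
      ((WithLp.equiv 2 (M × K)).symm (0, k))
    have h1 := congrArg (fun p => (WithLp.equiv 2 (M × K) p).1) this
    simpa [blockOp, map_zero] using h1
  have happK2 : ∀ k : K, adjoint C (C k) + F (F k) = k := by
    intro k
    have := congrFun (congrArg (fun (T : WithLp 2 (M × K) →L[ℂ] WithLp 2 (M × K)) =>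
      (T : WithLp 2 (M × K) → WithLp 2 (M × K))) hT2)
      ((WithLp.equiv 2 (M × K)).symm (0, k))
    have h1 := congrArg (fun p => (WithLp.equiv 2 (M × K) p).2) this
    simpa [blockOp, map_zero] using h1
  have hadjD : adjoint D = D := by rw [← star_eq_adjoint]; exact hD.star_eq
  have hadjF : adjoint F = F := by rw [← star_eq_adjoint]; exact hF.star_eq
  -- norm bounds
  have hnD : ‖D‖ ≤ 1 := by
    refine opNorm_le_bound D zero_le_one (fun m => ?_)
    rw [one_mul]
    have hpt : ⟪D (D m), m⟫_ℂ + ⟪C (adjoint C m), m⟫_ℂ = ⟪m, m⟫_ℂ := by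
      rw [← inner_add_left, happM m]
    have e1 : ⟪D (D m), m⟫_ℂ = ⟪D m, D m⟫_ℂ := by
      rw [← adjoint_inner_right, hadjD]
    have e2 : ⟪C (adjoint C m), m⟫_ℂ = ⟪adjoint C m, adjoint C m⟫_ℂ := by
      rw [← adjoint_inner_right]
    rw [e1, e2, inner_self_eq_norm_sq_to_K, inner_self_eq_norm_sq_to_K,
      inner_self_eq_norm_sq_to_K] at hpt
    have hre : ‖D m‖ ^ 2 + ‖adjoint C m‖ ^ 2 = ‖m‖ ^ 2 := by exact_mod_cast hpt
    nlinarith [norm_nonneg (D m), norm_nonneg m, sq_nonneg ‖adjoint C m‖]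
  have hnF : ‖F‖ ≤ 1 := by
    refine opNorm_le_bound F zero_le_one (fun k => ?_)
    rw [one_mul]
    have hpt : ⟪adjoint C (C k), k⟫_ℂ + ⟪F (F k), k⟫_ℂ = ⟪k, k⟫_ℂ := by
      rw [← inner_add_left, happK2 k]
    have e1 : ⟪F (F k), k⟫_ℂ = ⟪F k, F k⟫_ℂ := by
      rw [← adjoint_inner_right, hadjF]
    have e2 : ⟪adjoint C (C k), k⟫_ℂ = ⟪C k, C k⟫_ℂ := by
      rw [adjoint_inner_left]
    rw [e1, e2, inner_self_eq_norm_sq_to_K, inner_self_eq_norm_sq_to_K,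
      inner_self_eq_norm_sq_to_K] at hpt
    have hre : ‖C k‖ ^ 2 + ‖F k‖ ^ 2 = ‖k‖ ^ 2 := by exact_mod_cast hpt
    nlinarith [norm_nonneg (F k), norm_nonneg k, sq_nonneg ‖C k‖]
  -- operator equations
  have hCC : C ∘L adjoint C = 1 - D ∘L D := by
    ext m
    have := happM m
    simp only [coe_comp', Function.comp_apply, ContinuousLinearMap.sub_apply, ContinuousLinearMap.one_apply]
    linear_combination (norm := module) this
  have hDC : D ∘L C + C ∘L F = 0 := by
    ext k
    simpa using happK1 k
  -- main pointwise statement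
  have main : ∀ z ∈ Zdom,
      IsUnit ((1 : K →L[ℂ] K) - z • F) ∧ IsUnit ((1 : M →L[ℂ] M) + z • D) ∧
      D + z • (C ∘L Ring.inverse ((1 : K →L[ℂ] K) - z • F) ∘L adjoint C) =
        (z • (1 : M →L[ℂ] M) + D) * Ring.inverse ((1 : M →L[ℂ] M) + z • D) := by
    intro z hz
    have hFu : IsUnit ((1 : K →L[ℂ] K) - z • F) := by
      rcases subsingleton_or_nontrivial K with hK | hK
      · have : (1 : K →L[ℂ] K) - z • F = 1 := by
          ext k; exact Subsingleton.elim _ _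
        rw [this]; exact isUnit_one
      · exact aux_isUnit F hF hnF hz
    have hDu : IsUnit ((1 : M →L[ℂ] M) + z • D) := by
      rcases subsingleton_or_nontrivial M with hM | hM
      · have : (1 : M →L[ℂ] M) + z • D = 1 := by
          ext m; exact Subsingleton.elim _ _
        rw [this]; exact isUnit_one
      · have := aux_isUnit (-D) hD.neg (by simpa using hnD) hz
        simpa [sub_neg_eq_add, smul_neg] using this
    refine ⟨hFu, hDu, ?_⟩
    set G := Ring.inverse ((1 : K →L[ℂ] K) - z • F) with hGdef
    set H := Ring.inverse ((1 : M →L[ℂ] M) + z • D) with hHdef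
    have hkey : C ∘L ((1 : K →L[ℂ] K) - z • F) = ((1 : M →L[ℂ] M) + z • D) ∘L C := by
      ext k
      have := congrFun (congrArg (fun (f : K →L[ℂ] M) => (f : K → M)) hDC) k
      simp only [coe_comp', Function.comp_apply, ContinuousLinearMap.add_apply,
        ContinuousLinearMap.zero_apply, ContinuousLinearMap.sub_apply, ContinuousLinearMap.one_apply,
        ContinuousLinearMap.smul_apply, map_sub, map_smul] at this ⊢
      linear_combination (norm := module) (-z) • this
    have hinv1 : H.comp ((1 : M →L[ℂ] M) + z • D) = 1 := Ring.inverse_mul_cancel _ hDu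
    have hinv2 : ((1 : K →L[ℂ] K) - z • F).comp G = 1 := Ring.mul_inverse_cancel _ hFu
    have hinv3 : ((1 : M →L[ℂ] M) + z • D) * H = 1 := Ring.mul_inverse_cancel _ hDu
    have hinv4 : H * ((1 : M →L[ℂ] M) + z • D) = 1 := Ring.inverse_mul_cancel _ hDu
    have hCG : C ∘L G = H ∘L C := by
      calc C ∘L G = (H.comp ((1 : M →L[ℂ] M) + z • D)).comp (C ∘L G) := by
            rw [hinv1, ContinuousLinearMap.one_def, ContinuousLinearMap.id_comp]
        _ = H.comp (((((1 : M →L[ℂ] M) + z • D)).comp C).comp G) := by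
            rw [ContinuousLinearMap.comp_assoc, ContinuousLinearMap.comp_assoc]
        _ = H.comp ((C.comp ((1 : K →L[ℂ] K) - z • F)).comp G) := by rw [hkey]
        _ = H.comp (C.comp (((1 : K →L[ℂ] K) - z • F).comp G)) := by
            rw [ContinuousLinearMap.comp_assoc]
        _ = H ∘L C := by rw [hinv2, ContinuousLinearMap.one_def, ContinuousLinearMap.comp_id]
    have hCGC : C ∘L G ∘L adjoint C = H * ((1 : M →L[ℂ] M) - D * D) := by
      rw [← ContinuousLinearMap.comp_assoc, hCG, ContinuousLinearMap.comp_assoc, hCC]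
      simp only [ContinuousLinearMap.mul_def]
    rw [hCGC]
    have hcomm : ((1 : M →L[ℂ] M) - D * D) * ((1 : M →L[ℂ] M) + z • D)
        = ((1 : M →L[ℂ] M) + z • D) * ((1 : M →L[ℂ] M) - D * D) := by
      refine Commute.eq ?_
      refine Commute.sub_left (Commute.one_left _) ?_
      refine Commute.add_right (Commute.one_right _) ?_
      exact ((Commute.refl D).mul_left (Commute.refl D)).smul_right z
    have h1 : H * ((1 : M →L[ℂ] M) - D * D) * ((1 : M →L[ℂ] M) + z • D)
        = (1 : M →L[ℂ] M) - D * D := by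
      rw [mul_assoc, hcomm, ← mul_assoc, hinv4, one_mul]
    have hc : (D + z • (H * ((1 : M →L[ℂ] M) - D * D))) * ((1 : M →L[ℂ] M) + z • D)
        = z • (1 : M →L[ℂ] M) + D := by
      rw [add_mul, smul_mul_assoc, h1, mul_add, mul_one, mul_smul_comm, smul_sub]
      abel
    calc D + z • (H * ((1 : M →L[ℂ] M) - D * D))
        = (D + z • (H * ((1 : M →L[ℂ] M) - D * D))) * (((1 : M →L[ℂ] M) + z • D) * H) := by
          rw [hinv3, mul_one]
      _ = (z • (1 : M →L[ℂ] M) + D) * H := by rw [← mul_assoc, hc]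
  refine ⟨main, ?_⟩
  -- unitarity on the circle
  intro ξ hnorm h1ne hm1
  have hξ0 : ξ ≠ 0 := by
    intro h; rw [h] at hnorm; simp at hnorm
  have hmem : ξ ∈ Zdom := by
    rintro ⟨x, hx, hxe⟩
    have hxe' : ((x : ℝ) : ℂ) = ξ := hxe
    have hax : |x| = 1 := by
      have h6 : ‖((x : ℝ) : ℂ)‖ = 1 := by rw [hxe']; exact hnorm
      rwa [Complex.norm_real] at h6
    rcases abs_eq zero_le_one |>.mp hax with h' | h'
    · exact h1ne (by rw [← hxe', h']; norm_num)
    · exact hm1 (by rw [← hxe', h']; norm_num)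
  have hmem' : (starRingEnd ℂ) ξ ∈ Zdom := by
    rintro ⟨x, hx, hxe⟩
    apply hmem
    refine ⟨x, hx, ?_⟩
    have hxe' : ((x : ℝ) : ℂ) = starRingEnd ℂ ξ := hxe
    have := congrArg (starRingEnd ℂ) hxe'
    rwa [Complex.conj_ofReal, Complex.conj_conj] at this
  obtain ⟨hFu, hDu, heq⟩ := main ξ hmem
  have hDu' : IsUnit ((1 : M →L[ℂ] M) + (starRingEnd ℂ ξ) • D) := (main _ hmem').2.1
  rw [heq]
  set ξ' := starRingEnd ℂ ξ with hξ'def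
  have hnsq : Complex.normSq ξ = 1 := by
    rw [Complex.normSq_eq_norm_sq, hnorm, one_pow]
  have hξξ' : ξ * ξ' = 1 := by rw [hξ'def, Complex.mul_conj, hnsq]; norm_num
  have hξ'ξ : ξ' * ξ = 1 := by rw [mul_comm]; exact hξξ'
  set H := Ring.inverse ((1 : M →L[ℂ] M) + ξ • D) with hHdef
  set H' := Ring.inverse ((1 : M →L[ℂ] M) + ξ' • D) with hH'def
  set Ω := (ξ • (1 : M →L[ℂ] M) + D) * H with hΩ
  have hADH : ((1 : M →L[ℂ] M) + ξ • D) * H = 1 := Ring.mul_inverse_cancel _ hDu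
  have hH'A : H' * ((1 : M →L[ℂ] M) + ξ' • D) = 1 := Ring.inverse_mul_cancel _ hDu'
  have hstar1 : star ((1 : M →L[ℂ] M) + ξ • D) = (1 : M →L[ℂ] M) + ξ' • D := by
    rw [star_add, star_one, star_smul, hD.star_eq]
    rfl
  have hstarΩ : star Ω = H' * (ξ' • (1 : M →L[ℂ] M) + D) := by
    rw [hΩ, star_mul]
    congr 1
    · rw [hHdef, ← Ring.inverse_star, hstar1, hH'def]
    · rw [star_add, star_smul, star_one, hD.star_eq]
      rfl
  have hprod : (ξ' • (1 : M →L[ℂ] M) + D) * (ξ • (1 : M →L[ℂ] M) + D)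
      = ((1 : M →L[ℂ] M) + ξ' • D) * ((1 : M →L[ℂ] M) + ξ • D) := by
    simp only [add_mul, mul_add, one_mul, mul_one, smul_mul_assoc, mul_smul_comm,
      smul_add, smul_smul, hξ'ξ, hξξ', one_smul]
    abel
  have hso : star Ω * Ω = 1 := by
    rw [hstarΩ, hΩ, mul_assoc, ← mul_assoc (ξ' • (1 : M →L[ℂ] M) + D), hprod,
      mul_assoc ((1 : M →L[ℂ] M) + ξ' • D), hADH, mul_one]
    exact hH'A
  have hΩu : IsUnit Ω := by
    have hrw : ξ • ((1 : M →L[ℂ] M) + ξ' • D) = ξ • (1 : M →L[ℂ] M) + D := by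
      rw [smul_add, smul_smul, hξξ', one_smul]
    have h1u : IsUnit (ξ • (1 : M →L[ℂ] M) + D) := by
      rw [← hrw]
      exact (isUnit_smul_iff (Units.mk0 ξ hξ0) ((1 : M →L[ℂ] M) + ξ' • D)).mpr hDu'
    have hHu : IsUnit H := by
      obtain ⟨u, hu⟩ := hDu
      rw [hHdef, ← hu, Ring.inverse_unit]
      exact u⁻¹.isUnit
    exact h1u.mul hHu
  have hos : Ω * star Ω = 1 := by
    obtain ⟨u, hu⟩ := hΩu
    have hinv : star Ω = ↑u⁻¹ := by
      have h5 : star Ω * ↑u = 1 := by rw [hu]; exact hso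
      calc star Ω = star Ω * (↑u * ↑u⁻¹) := by rw [Units.mul_inv, mul_one]
        _ = ↑u⁻¹ := by rw [← mul_assoc, h5, one_mul]
    rw [hinv, ← hu, Units.mul_inv]
  exact Unitary.mem_iff.mpr ⟨hso, hos⟩
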